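/- Let (X, Y, Z, p_{Y,Z|X}) be a discrete memoryless WTC, let c_n = (f_n, φ_n) be an (n,R)-code for it with induced joint PMF P̃^{(c_n)} on M_n × X^n × Y^n × Z^n × M_n, and let q_Z be any PMF on Z. Define the GPC code b_n = (g_n, ψ_n) for the GPC (Z, X, Y, q_Z, p_{Y|X,Z}) by g_n = P̃^{(c_n)}_{X^n|Z^n,M} (the conditional PMF of X^n given (Z^n, M) under P̃^{(c_n)}) and ψ_n = φ_n, with induced joint PMF Q̃^{(b_n)} on Z^n × M_n × X^n × Y^n × M_n. Then ‖P̃^{(c_n)} − Q̃^{(b_n)}‖_TV = ‖P̃^{(c_n)}_{M,Z^n} − p^U_{M_n} ⊗ q_Z^n‖_TV. -/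

import Mathlib

open scoped BigOperators Classical

noncomputable section

/-- Total variation distance between two PMFs on a finite set. -/
def tvDist {Ω : Type*} [Fintype Ω] (p q : Ω → ℝ) : ℝ :=
  (1 / 2) * ∑ x, |p x - q x|

/-- `p` is a probability mass function on the finite set `Ω`. -/
def IsPMF {Ω : Type*} [Fintype Ω] (p : Ω → ℝ) : Prop := (∀ x, 0 ≤ p x) ∧ ∑ x, p x = 1

/-- The message set `[1 : 2^{nR}]`, modelled as `Fin ⌈2^{nR}⌉`. -/
abbrev Msg (n : ℕ) (R : ℝ) : Type := Fin ⌈(2 : ℝ) ^ ((n : ℝ) * R)⌉₊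

/-- An `(n,R)`-code for the wiretap channel: a stochastic encoder `f_n : M_n → P(Xⁿ)`
(given by the data `enc`, required to be a transition kernel via `WTCCode.valid`) and a
decoder `φ_n : Yⁿ → M_n`. -/
structure WTCCode (X Y Z : Type) [Fintype X] [Fintype Y] [Fintype Z] (n : ℕ) (R : ℝ) where
  enc : Msg n R → (Fin n → X) → ℝ
  dec : (Fin n → Y) → Msg n R

/-- The encoder of a wiretap code is an honest stochastic map. -/
def WTCCode.valid {X Y Z : Type} [Fintype X] [Fintype Y] [Fintype Z] {n : ℕ} {R : ℝ}
    (c : WTCCode X Y Z n R) : Prop := ∀ m, IsPMF (c.enc m)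

/-- An `(n,R)`-code for the Gelfand-Pinsker channel: a stochastic encoder
`g_n : Zⁿ × M_n → P(Xⁿ)` (data `enc`, kernel property via `GPCCode.valid`) and a decoder
`ψ_n : Yⁿ → M_n`. -/
structure GPCCode (Z X Y : Type) [Fintype Z] [Fintype X] [Fintype Y] (n : ℕ) (R : ℝ) where
  enc : (Fin n → Z) → Msg n R → (Fin n → X) → ℝ
  dec : (Fin n → Y) → Msg n R

/-- The encoder of a Gelfand-Pinsker code is an honest stochastic map. -/
def GPCCode.valid {Z X Y : Type} [Fintype Z] [Fintype X] [Fintype Y] {n : ℕ} {R : ℝ}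
    (b : GPCCode Z X Y n R) : Prop := ∀ z m, IsPMF (b.enc z m)

variable {X Y Z : Type} [Fintype X] [Fintype Y] [Fintype Z] {n : ℕ} {R : ℝ}

/-- The joint PMF `P̃^{(c_n)}` on `M_n × Xⁿ × Yⁿ × Zⁿ × M_n` induced by an `(n,R)`-wiretap
code `c` over the memoryless WTC with transition kernel `W = p_{Y,Z|X}`:
`P̃(m,x,y,z,m̂) = |M_n|⁻¹ f_n(x|m) Π_i W(y_i,z_i|x_i) 1{m̂ = φ_n(y)}`. -/
def WTCCode.joint (W : X → Y × Z → ℝ) (c : WTCCode X Y Z n R) :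
    Msg n R × (Fin n → X) × (Fin n → Y) × (Fin n → Z) × Msg n R → ℝ := fun ω =>
  ((Fintype.card (Msg n R) : ℝ)⁻¹) * c.enc ω.1 ω.2.1
    * (∏ i, W (ω.2.1 i) (ω.2.2.1 i, ω.2.2.2.1 i))
    * (if c.dec ω.2.2.1 = ω.2.2.2.2 then 1 else 0)

/-- The marginal `P̃^{(c_n)}_{M,Zⁿ}`. -/
def WTCCode.margMZ (W : X → Y × Z → ℝ) (c : WTCCode X Y Z n R) :
    Msg n R × (Fin n → Z) → ℝ := fun ω =>
  ∑ x, ∑ y, ∑ mh, c.joint W (ω.1, x, y, ω.2, mh)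

/-- The marginal `P̃^{(c_n)}_{M,M̂,Zⁿ}` (recorded in the order `(M, Zⁿ, M̂)`). -/
def WTCCode.margMZM (W : X → Y × Z → ℝ) (c : WTCCode X Y Z n R) :
    Msg n R × (Fin n → Z) × Msg n R → ℝ := fun ω =>
  ∑ x, ∑ y, c.joint W (ω.1, x, y, ω.2.1, ω.2.2)

/-- The conditional marginal `p_{Y|X,Z}` of the WTC transition kernel `p_{Y,Z|X}`
(defined arbitrarily — uniform — where `p_{Z|X}(z|x) = 0`). -/
def condYgivenXZ (W : X → Y × Z → ℝ) : X → Z → Y → ℝ := fun x z y =>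
  if 0 < ∑ y', W x (y', z) then W x (y, z) / ∑ y', W x (y', z)
  else (Fintype.card Y : ℝ)⁻¹

/-- The stochastic Gelfand-Pinsker encoder `g_n = P̃^{(c_n)}_{Xⁿ|Zⁿ,M}` obtained from a
wiretap code `c` by conditioning its induced joint PMF on `(Zⁿ, M)` (defined arbitrarily —
uniform — where `P̃^{(c_n)}_{M,Zⁿ} = 0`). -/
def inducedGPEnc (W : X → Y × Z → ℝ) (c : WTCCode X Y Z n R) :
    (Fin n → Z) → Msg n R → (Fin n → X) → ℝ := fun z m x =>
  if 0 < c.margMZ W (m, z)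
  then (∑ y, ∑ mh, c.joint W (m, x, y, z, mh)) / c.margMZ W (m, z)
  else (Fintype.card (Fin n → X) : ℝ)⁻¹

/-- The Gelfand-Pinsker code `b_n = (g_n, ψ_n)` induced by a wiretap code `c_n = (f_n, φ_n)`:
`g_n = P̃^{(c_n)}_{Xⁿ|Zⁿ,M}` and `ψ_n = φ_n`. -/
def WTCCode.toGPC (W : X → Y × Z → ℝ) (c : WTCCode X Y Z n R) : GPCCode Z X Y n R where
  enc := inducedGPEnc W c
  dec := c.dec

/-- The joint PMF `Q̃^{(b_n)}` induced by an `(n,R)`-Gelfand-Pinsker code `b` over the GPC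
with state PMF `q_Z` and transition kernel `Wg = q_{Y|X,Z}`, recorded on the sample space
`M_n × Xⁿ × Yⁿ × Zⁿ × M_n` (the same ordering as `WTCCode.joint`, so that the two induced
distributions can be compared):
`Q̃(m,x,y,z,m̂) = q_Z^n(z) |M_n|⁻¹ g_n(x|z,m) Π_i Wg(y_i|x_i,z_i) 1{m̂ = ψ_n(y)}`. -/
def GPCCode.joint (qZ : Z → ℝ) (Wg : X → Z → Y → ℝ) (b : GPCCode Z X Y n R) :
    Msg n R × (Fin n → X) × (Fin n → Y) × (Fin n → Z) × Msg n R → ℝ := fun ω =>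
  (∏ i, qZ (ω.2.2.2.1 i)) * ((Fintype.card (Msg n R) : ℝ)⁻¹)
    * b.enc ω.2.2.2.1 ω.1 ω.2.1
    * (∏ i, Wg (ω.2.1 i) (ω.2.2.2.1 i) (ω.2.2.1 i))
    * (if b.dec ω.2.2.1 = ω.2.2.2.2 then 1 else 0)

/-- The error probability `ℙ_{Q̃^{(b_n)}}(M̂ ≠ M)` of a Gelfand-Pinsker code. -/
def GPCCode.errProb (qZ : Z → ℝ) (Wg : X → Z → Y → ℝ) (b : GPCCode Z X Y n R) : ℝ :=
  ∑ ω : Msg n R × (Fin n → X) × (Fin n → Y) × (Fin n → Z) × Msg n R,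
    if ω.2.2.2.2 ≠ ω.1 then b.joint qZ Wg ω else 0

/-- The target measure `p^U_{M_n} ⊗ q_Z^n` on `M_n × Zⁿ`. -/
def targetMZ (qZ : Z → ℝ) (n : ℕ) (R : ℝ) : Msg n R × (Fin n → Z) → ℝ := fun ω =>
  ((Fintype.card (Msg n R) : ℝ)⁻¹) * ∏ i, qZ (ω.2 i)

/-- The target measure `p^U_{M_n} · 1{M̂ = M} · q_Z^n` on `M_n × Zⁿ × M_n`. -/
def targetMZM (qZ : Z → ℝ) (n : ℕ) (R : ℝ) : Msg n R × (Fin n → Z) × Msg n R → ℝ :=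
  fun ω => ((Fintype.card (Msg n R) : ℝ)⁻¹) * (if ω.2.2 = ω.1 then 1 else 0)
    * ∏ i, qZ (ω.2.1 i)


section Aux

variable {X Y Z : Type} [Fintype X] [Fintype Y] [Fintype Z] {n : ℕ} {R : ℝ}

private lemma sum_fun_prod {B : Type} [Fintype B] (h : Fin n → B → ℝ) :
    ∑ y : Fin n → B, ∏ i, h i (y i) = ∏ i, ∑ a, h i a := by
  rw [← Fintype.piFinset_univ, Finset.sum_prod_piFinset]

/-- The common conditional kernel on `(Xⁿ, Yⁿ, M̂)` given `(M, Zⁿ)`. -/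
private def wtcKernel (W : X → Y × Z → ℝ) (c : WTCCode X Y Z n R) :
    Msg n R × (Fin n → X) × (Fin n → Y) × (Fin n → Z) × Msg n R → ℝ := fun ω =>
  inducedGPEnc W c ω.2.2.2.1 ω.1 ω.2.1
    * (∏ i, condYgivenXZ W (ω.2.1 i) (ω.2.2.2.1 i) (ω.2.2.1 i))
    * (if c.dec ω.2.2.1 = ω.2.2.2.2 then 1 else 0)

private lemma joint_nonneg {W : X → Y × Z → ℝ} (hW : ∀ x, IsPMF (W x))
    {c : WTCCode X Y Z n R} (hc : c.valid) (ω) : 0 ≤ c.joint W ω := by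
  refine mul_nonneg (mul_nonneg (mul_nonneg (by positivity) ((hc ω.1).1 ω.2.1))
    (Finset.prod_nonneg fun i _ => (hW _).1 _)) ?_
  split <;> norm_num

private lemma margMZ_nonneg {W : X → Y × Z → ℝ} (hW : ∀ x, IsPMF (W x))
    {c : WTCCode X Y Z n R} (hc : c.valid) (p) : 0 ≤ c.margMZ W p :=
  Finset.sum_nonneg fun _ _ => Finset.sum_nonneg fun _ _ => Finset.sum_nonneg fun _ _ =>
    joint_nonneg hW hc _

private lemma joint_le_margMZ {W : X → Y × Z → ℝ} (hW : ∀ x, IsPMF (W x))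
    {c : WTCCode X Y Z n R} (hc : c.valid) (m x y z mh) :
    c.joint W (m, x, y, z, mh) ≤ c.margMZ W (m, z) := by
  have h1 : c.joint W (m, x, y, z, mh) ≤ ∑ mh', c.joint W (m, x, y, z, mh') :=
    Finset.single_le_sum (f := fun mh' => c.joint W (m, x, y, z, mh'))
      (fun a _ => joint_nonneg hW hc _) (Finset.mem_univ mh)
  have h2 : ∑ mh', c.joint W (m, x, y, z, mh')
      ≤ ∑ y', ∑ mh', c.joint W (m, x, y', z, mh') :=
    Finset.single_le_sum (f := fun y' => ∑ mh', c.joint W (m, x, y', z, mh'))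
      (fun a _ => Finset.sum_nonneg fun _ _ => joint_nonneg hW hc _) (Finset.mem_univ y)
  have h3 : ∑ y', ∑ mh', c.joint W (m, x, y', z, mh')
      ≤ ∑ x', ∑ y', ∑ mh', c.joint W (m, x', y', z, mh') :=
    Finset.single_le_sum (f := fun x' => ∑ y', ∑ mh', c.joint W (m, x', y', z, mh'))
      (fun a _ => Finset.sum_nonneg fun _ _ => Finset.sum_nonneg fun _ _ =>
        joint_nonneg hW hc _) (Finset.mem_univ x)
  exact (h1.trans h2).trans h3

private lemma sum_mh_joint (W : X → Y × Z → ℝ) (c : WTCCode X Y Z n R) (m x y z) :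
    ∑ mh, c.joint W (m, x, y, z, mh)
      = ((Fintype.card (Msg n R) : ℝ)⁻¹) * c.enc m x * ∏ i, W (x i) (y i, z i) := by
  simp only [WTCCode.joint]
  rw [← Finset.mul_sum]
  simp

private lemma sum_y_mh_joint (W : X → Y × Z → ℝ) (c : WTCCode X Y Z n R) (m x z) :
    ∑ y, ∑ mh, c.joint W (m, x, y, z, mh)
      = ((Fintype.card (Msg n R) : ℝ)⁻¹) * c.enc m x * ∏ i, ∑ y', W (x i) (y', z i) := by
  simp only [sum_mh_joint]
  rw [← Finset.mul_sum, sum_fun_prod (fun i b => W (x i) (b, z i))]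

private lemma sum_condY {W : X → Y × Z → ℝ} (hW : ∀ x, IsPMF (W x)) (x : X) (z : Z) :
    ∑ a, condYgivenXZ W x z a = 1 := by
  by_cases hs : 0 < ∑ y', W x (y', z)
  · simp only [condYgivenXZ, if_pos hs]
    rw [← Finset.sum_div, div_self hs.ne']
  · have hY : Nonempty Y := by
      by_contra h
      rw [not_nonempty_iff] at h
      have := (hW x).2
      simp [Finset.univ_eq_empty] at this
    simp only [condYgivenXZ, if_neg hs]
    rw [Finset.sum_const, nsmul_eq_mul, Finset.card_univ,
      mul_inv_cancel₀ (by exact_mod_cast Fintype.card_ne_zero)]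

private lemma S_mul_condY {W : X → Y × Z → ℝ} (hW : ∀ x, IsPMF (W x)) (x : X) (z : Z)
    (y : Y) : (∑ y', W x (y', z)) * condYgivenXZ W x z y = W x (y, z) := by
  by_cases hs : 0 < ∑ y', W x (y', z)
  · rw [condYgivenXZ, if_pos hs, mul_comm, div_mul_cancel₀ _ hs.ne']
  · have hs0 : ∑ y', W x (y', z) = 0 :=
      le_antisymm (not_lt.mp hs) (Finset.sum_nonneg fun _ _ => (hW _).1 _)
    have hW0 : W x (y, z) = 0 := by
      refine le_antisymm ?_ ((hW _).1 _)
      calc W x (y, z) ≤ ∑ y', W x (y', z) :=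
            Finset.single_le_sum (f := fun y' => W x (y', z))
              (fun a _ => (hW _).1 _) (Finset.mem_univ y)
        _ = 0 := hs0
    rw [hs0, hW0, zero_mul]

private lemma factorP {W : X → Y × Z → ℝ} (hW : ∀ x, IsPMF (W x))
    {c : WTCCode X Y Z n R} (hc : c.valid) (ω) :
    c.joint W ω = c.margMZ W (ω.1, ω.2.2.2.1) * wtcKernel W c ω := by
  obtain ⟨m, x, y, z, mh⟩ := ω
  by_cases hpos : 0 < c.margMZ W (m, z)
  · simp only [wtcKernel, inducedGPEnc, if_pos hpos, sum_y_mh_joint]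
    have key : (∏ i, ∑ y', W (x i) (y', z i))
        * (∏ i, condYgivenXZ W (x i) (z i) (y i)) = ∏ i, W (x i) (y i, z i) := by
      rw [← Finset.prod_mul_distrib]
      exact Finset.prod_congr rfl fun i _ => S_mul_condY hW _ _ _
    have hm := hpos.ne'
    show c.joint W (m, x, y, z, mh) = _
    simp only [WTCCode.joint]
    rw [← key]
    field_simp
  · have h0 : c.margMZ W (m, z) = 0 :=
      le_antisymm (not_lt.mp hpos) (margMZ_nonneg hW hc _)
    have hj : c.joint W (m, x, y, z, mh) = 0 :=
      le_antisymm (h0 ▸ joint_le_margMZ hW hc m x y z mh) (joint_nonneg hW hc _)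
    show c.joint W (m, x, y, z, mh) = c.margMZ W (m, z) * _
    rw [hj, h0, zero_mul]

private lemma factorQ (W : X → Y × Z → ℝ) (c : WTCCode X Y Z n R) (qZ : Z → ℝ) (ω) :
    (c.toGPC W).joint qZ (condYgivenXZ W) ω
      = targetMZ qZ n R (ω.1, ω.2.2.2.1) * wtcKernel W c ω := by
  simp only [GPCCode.joint, WTCCode.toGPC, targetMZ, wtcKernel]
  ring
  rfl

private lemma kernel_nonneg {W : X → Y × Z → ℝ} (hW : ∀ x, IsPMF (W x))
    {c : WTCCode X Y Z n R} (hc : c.valid) (ω) : 0 ≤ wtcKernel W c ω := by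
  refine mul_nonneg (mul_nonneg ?_ (Finset.prod_nonneg fun i _ => ?_)) ?_
  · unfold inducedGPEnc
    split
    · exact div_nonneg
        (Finset.sum_nonneg fun _ _ => Finset.sum_nonneg fun _ _ => joint_nonneg hW hc _)
        (margMZ_nonneg hW hc _)
    · positivity
  · unfold condYgivenXZ
    split
    · exact div_nonneg ((hW _).1 _) (by linarith)
    · positivity
  · split <;> norm_num

private lemma kernel_sum_one {W : X → Y × Z → ℝ} (hW : ∀ x, IsPMF (W x))
    {c : WTCCode X Y Z n R} (hc : c.valid) (m : Msg n R) (z : Fin n → Z) :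
    ∑ x, ∑ y, ∑ mh, wtcKernel W c (m, x, y, z, mh) = 1 := by
  have hXn : Nonempty (Fin n → X) := by
    by_contra h
    rw [not_nonempty_iff] at h
    have := (hc m).2
    simp [Finset.univ_eq_empty] at this
  have hy1 : ∀ x : Fin n → X,
      ∑ y : Fin n → Y, ∏ i, condYgivenXZ W (x i) (z i) (y i) = 1 := by
    intro x
    rw [sum_fun_prod (fun i b => condYgivenXZ W (x i) (z i) b)]
    exact Finset.prod_eq_one fun i _ => sum_condY hW _ _
  have hg : ∑ x, inducedGPEnc W c z m x = 1 := by
    by_cases hpos : 0 < c.margMZ W (m, z)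
    · simp only [inducedGPEnc, if_pos hpos]
      rw [← Finset.sum_div]
      exact div_self hpos.ne'
    · simp only [inducedGPEnc, if_neg hpos]
      rw [Finset.sum_const, nsmul_eq_mul, Finset.card_univ,
        mul_inv_cancel₀ (by exact_mod_cast Fintype.card_ne_zero)]
  calc ∑ x, ∑ y, ∑ mh, wtcKernel W c (m, x, y, z, mh)
      = ∑ x, ∑ y : Fin n → Y,
          inducedGPEnc W c z m x * ∏ i, condYgivenXZ W (x i) (z i) (y i) := by
        refine Finset.sum_congr rfl fun x _ => Finset.sum_congr rfl fun y _ => ?_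
        simp only [wtcKernel]
        rw [← Finset.mul_sum]
        simp
    _ = ∑ x, inducedGPEnc W c z m x := by
        refine Finset.sum_congr rfl fun x _ => ?_
        rw [← Finset.mul_sum, hy1 x, mul_one]
    _ = 1 := hg

/-- Reordering of the sample space. -/
private def reindex (X Y Z : Type) (n : ℕ) (R : ℝ) :
    (Msg n R × (Fin n → X) × (Fin n → Y) × (Fin n → Z) × Msg n R)
      ≃ (Msg n R × (Fin n → Z)) × ((Fin n → X) × (Fin n → Y) × Msg n R) where
  toFun ω := ((ω.1, ω.2.2.2.1), (ω.2.1, ω.2.2.1, ω.2.2.2.2))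
  invFun p := (p.1.1, p.2.1, p.2.2.1, p.1.2, p.2.2.2)
  left_inv _ := rfl
  right_inv _ := rfl

end Aux

/-- **The induced distributions of a wiretap code and of its associated Gelfand-Pinsker
code are as close as the wiretap code is to its target measure.**
For any `(n,R)`-wiretap code `c_n = (f_n, φ_n)` over the WTC `p_{Y,Z|X}` and any PMF `q_Z`
on `Z`, letting `b_n = (g_n, ψ_n)` with `g_n = P̃^{(c_n)}_{Xⁿ|Zⁿ,M}` and `ψ_n = φ_n` be the
induced code for the GPC `(q_Z, p_{Y|X,Z})`,
`‖P̃^{(c_n)} − Q̃^{(b_n)}‖_TV = ‖P̃^{(c_n)}_{M,Zⁿ} − p^U_{M_n} ⊗ q_Z^n‖_TV`. -/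
theorem tv_joint_eq_tv_margMZ
    (W : X → Y × Z → ℝ) (hW : ∀ x, IsPMF (W x))
    (hR : 0 ≤ R) (c : WTCCode X Y Z n R) (hc : c.valid)
    (qZ : Z → ℝ) (hqZ : IsPMF qZ) :
    tvDist (c.joint W) ((c.toGPC W).joint qZ (condYgivenXZ W))
      = tvDist (c.margMZ W) (targetMZ qZ n R) := by
  unfold tvDist
  congr 1
  calc ∑ ω, |c.joint W ω - (c.toGPC W).joint qZ (condYgivenXZ W) ω|
      = ∑ ω, |c.margMZ W (ω.1, ω.2.2.2.1) - targetMZ qZ n R (ω.1, ω.2.2.2.1)|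
          * wtcKernel W c ω := by
        refine Finset.sum_congr rfl fun ω _ => ?_
        rw [factorP hW hc, factorQ, ← sub_mul, abs_mul,
          abs_of_nonneg (kernel_nonneg hW hc ω)]
    _ = ∑ p : (Msg n R × (Fin n → Z)) × ((Fin n → X) × (Fin n → Y) × Msg n R),
          |c.margMZ W p.1 - targetMZ qZ n R p.1|
            * wtcKernel W c (p.1.1, p.2.1, p.2.2.1, p.1.2, p.2.2.2) := by
        refine Fintype.sum_equiv (reindex X Y Z n R) _ _ fun ω => rfl
    _ = ∑ p : Msg n R × (Fin n → Z), |c.margMZ W p - targetMZ qZ n R p| := by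
        rw [Fintype.sum_prod_type]
        refine Finset.sum_congr rfl fun p _ => ?_
        dsimp only
        rw [← Finset.mul_sum]
        have : ∑ r : (Fin n → X) × (Fin n → Y) × Msg n R,
            wtcKernel W c (p.1, r.1, r.2.1, p.2, r.2.2) = 1 := by
          simp only [Fintype.sum_prod_type]
          exact kernel_sum_one hW hc p.1 p.2
        rw [this, mul_one]


end
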